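/- If T is self-adjoint, then for every n ≥ 2, ker(I - T̃)ⁿ = ker(I-T) ⊕ ker(I-T) = {(f,g) : f, g ∈ ker(I - T)}; in particular the generalized eigenspace of T̃ at 1 stabilizes at n = 2. -/

import Mathlib

open ContinuousLinearMap

theorem stmt13 {K₁ : Type*}
    [NormedAddCommGroup K₁] [InnerProductSpace ℂ K₁] [FiniteDimensional ℂ K₁]
    (T : K₁ →L[ℂ] K₁) (hT : IsSelfAdjoint T)
    (Ttil : K₁ × K₁ →L[ℂ] K₁ × K₁)
    (hTtil : ∀ f g : K₁, Ttil (f, g) = (-g, f + (2:ℂ) • T g)) :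
    ∀ n : ℕ, 2 ≤ n →
      {ψ : K₁ × K₁ | ((1 - Ttil) ^ n) ψ = 0}
        = {ψ : K₁ × K₁ | T ψ.1 = ψ.1 ∧ T ψ.2 = ψ.2} := by
  have hS : ∀ f g : K₁, (1 - Ttil) (f, g) = (f + g, g - f - (2:ℂ) • T g) := by
    intro f g
    rw [sub_apply, ContinuousLinearMap.one_apply, hTtil]
    ext
    · simp [sub_neg_eq_add]
    · simp [sub_add_eq_sub_sub]
  -- A := T - 1 is self-adjoint; A² x = 0 → A x = 0
  have hA : ∀ x : K₁, T (T x - x) - (T x - x) = 0 → T x - x = 0 := by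
    intro x hx
    set A : K₁ →L[ℂ] K₁ := T - 1 with hAdef
    have hAsa : IsSelfAdjoint A := hT.sub (IsSelfAdjoint.one _)
    have hAapp : ∀ y : K₁, A y = T y - y := by
      intro y; simp [hAdef, sub_apply]
    have hAx : A (A x) = 0 := by rw [hAapp, hAapp, hx]
    have hsym := hAsa.isSymmetric
    have h0 : (inner ℂ (A x) (A x) : ℂ) = 0 := by
      have := hsym x (A x)
      simp only [ContinuousLinearMap.coe_coe] at this
      rw [this, hAx, inner_zero_right]
    have := inner_self_eq_zero.mp h0
    rw [hAapp] at this
    exact this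
  have hS2 : ∀ f g : K₁, (1 - Ttil) ((1 - Ttil) (f, g)) = 0 ↔ T f = f ∧ T g = g := by
    intro f g
    rw [hS, hS, Prod.mk_eq_zero]
    constructor
    · rintro ⟨h1, h2⟩
      have hg : T g = g := by
        have e : (2:ℂ) • (g - T g) = f + g + (g - f - (2:ℂ) • T g) := by module
        rw [h1] at e
        rcases smul_eq_zero.mp e with h | h
        · exact absurd h two_ne_zero
        · exact (sub_eq_zero.mp h).symm
      refine ⟨?_, hg⟩
      rw [map_sub, map_sub, map_smul] at h2
      simp only [hg] at h2
      -- h2 : (g - f - 2•g) - (f + g) - 2•(g - T f - 2•g) = 0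
      have e : (2:ℂ) • (T f - f)
          = g - f - (2:ℂ) • g - (f + g) - (2:ℂ) • (g - T f - (2:ℂ) • g) := by module
      rw [h2] at e
      rcases smul_eq_zero.mp e with h | h
      · exact absurd h two_ne_zero
      · exact sub_eq_zero.mp h
    · rintro ⟨hf, hg⟩
      rw [map_sub, map_sub, map_smul]
      simp only [hf, hg]
      constructor <;> module
  -- stability: ker S^(m+2) ⊆ ker S^2 (as the explicit set)
  have key : ∀ m : ℕ, ∀ ψ : K₁ × K₁,
      ((1 - Ttil) ^ (m + 2)) ψ = 0 → T ψ.1 = ψ.1 ∧ T ψ.2 = ψ.2 := by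
    intro m
    induction m with
    | zero =>
      intro ψ h
      obtain ⟨f, g⟩ := ψ
      rw [pow_two, ContinuousLinearMap.mul_apply] at h
      exact (hS2 f g).mp h
    | succ k ih =>
      intro ψ h
      have h' : ((1 - Ttil) ^ (k + 2)) ((1 - Ttil) ψ) = 0 := by
        rw [← ContinuousLinearMap.mul_apply, ← pow_succ]
        exact h
      have h2 := ih ((1 - Ttil) ψ) h'
      obtain ⟨f, g⟩ := ψ
      rw [hS] at h2
      obtain ⟨hu, hv⟩ := h2
      have hg' : T g - g = 0 := by
        apply hA
        have hsum : T ((f + g) + (g - f - (2:ℂ) • T g))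
            = (f + g) + (g - f - (2:ℂ) • T g) := by
          rw [map_add, hu, hv]
        have harg : (f + g) + (g - f - (2:ℂ) • T g) = (-2:ℂ) • (T g - g) := by module
        rw [harg, map_smul] at hsum
        have e : (-2:ℂ) • (T (T g - g) - (T g - g)) = 0 := by
          rw [smul_sub, hsum, sub_self]
        rcases smul_eq_zero.mp e with h | h
        · exact absurd h (by norm_num)
        · exact h
      have hg : T g = g := sub_eq_zero.mp hg'
      have hf : T f = f := by
        rw [map_add, hg] at hu
        exact add_right_cancel hu
      exact ⟨hf, hg⟩
  intro n hn
  obtain ⟨m, rfl⟩ := Nat.exists_eq_add_of_le hn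
  ext ψ
  obtain ⟨f, g⟩ := ψ
  simp only [Set.mem_setOf_eq]
  constructor
  · intro h
    apply key m (f, g)
    rw [show m + 2 = 2 + m from Nat.add_comm m 2]
    exact h
  · rintro ⟨hf, hg⟩
    have h2 : (1 - Ttil) ((1 - Ttil) (f, g)) = 0 := (hS2 f g).mpr ⟨hf, hg⟩
    rw [show (2 + m) = m + 2 from Nat.add_comm 2 m, pow_add, ContinuousLinearMap.mul_apply,
      pow_two, ContinuousLinearMap.mul_apply, h2, map_zero]
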